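/- arXiv:2103.09650 — 2 statements merged into one kernel-verified Lean document; each statement's English description precedes it below -/
import Mathlib

section
/- Let T>0, λ>0 and let 0<m<2π²/(λT). Then for every continuously differentiable T-periodic function ψ:ℝ→ℂ with ∫₀ᵀ|ψ(x)|²dx=m, the energy satisfies E(ψ) := (1/2)∫₀ᵀ|ψ'(x)|²dx − (λ/4)∫₀ᵀ|ψ(x)|⁴dx ≥ −λm²/(4T), and equality holds if and only if ψ is a constant function of the form ψ(x)=√(m/T)·e^{iθ} for some θ∈ℝ. -/
open MeasureTheory Filter Set intervalIntegral
open scoped Real ENNReal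

section Wirtinger
variable {T : ℝ}

lemma lift_eq_liftIoc [hT : Fact (0 < T)] (W : ℝ → ℂ) (hper : Function.Periodic W T) :
    hper.lift = AddCircle.liftIoc T 0 W := by
  funext z
  have hz : (((AddCircle.equivIoc T 0 z : Ioc (0:ℝ) (0 + T)) : ℝ) : AddCircle T) = z := by
    conv_rhs => rw [← (AddCircle.equivIoc T 0).symm_apply_apply z]
    rfl
  conv_lhs => rw [← hz]
  rw [Function.Periodic.lift_coe]
  rfl

lemma continuous_periodic_lift [hT : Fact (0 < T)] {W : ℝ → ℂ} (hper : Function.Periodic W T)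
    (hc : Continuous W) : Continuous hper.lift :=
  hc.quotient_liftOn' _

end Wirtinger

lemma periodic_deriv' {W : ℝ → ℂ} (hW : ContDiff ℝ 1 W) (hper : Function.Periodic W T) :
    Function.Periodic (deriv W) T := by
  intro x
  have h1 : HasDerivAt W (deriv W (x + T)) (x + T) :=
    ((hW.differentiable one_ne_zero) (x + T)).hasDerivAt
  have h2 : HasDerivAt (fun y => W (y + T)) (deriv W (x + T)) x :=
    h1.comp_add_const x T
  have h3 : HasDerivAt W (deriv W (x + T)) x := by
    apply h2.congr_of_eventuallyEq
    filter_upwards with y using (hper y).symm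
  exact (h3.deriv).symm

lemma wirtinger {T : ℝ} (hT : 0 < T) (W : ℝ → ℂ) (hW : ContDiff ℝ 1 W)
    (hper : Function.Periodic W T) (hmean : ∫ x in (0:ℝ)..T, W x = 0) :
    ∫ x in (0:ℝ)..T, ‖W x‖^2 ≤ (T/(2*Real.pi))^2 * ∫ x in (0:ℝ)..T, ‖deriv W x‖^2 := by
  haveI hTf : Fact (0 < T) := ⟨hT⟩
  have hper' : Function.Periodic (deriv W) T := periodic_deriv' hW hper
  have hWc : Continuous W := hW.continuous
  have hW'c : Continuous (deriv W) := hW.continuous_deriv le_rfl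
  set FC : C(AddCircle T, ℂ) := ⟨hper.lift, continuous_periodic_lift hper hWc⟩ with hFC
  set F'C : C(AddCircle T, ℂ) := ⟨hper'.lift, continuous_periodic_lift hper' hW'c⟩ with hF'C
  have h0T : (0:ℝ) < 0 + T := lt_add_of_pos_right 0 hT
  -- bridge
  have hbr : ∀ n, fourierCoeff (FC : AddCircle T → ℂ) n = fourierCoeffOn h0T W n := by
    intro n
    have : (FC : AddCircle T → ℂ) = hper.lift := rfl
    rw [this, lift_eq_liftIoc W hper, fourierCoeff_liftIoc_eq]
  have hbr' : ∀ n, fourierCoeff (F'C : AddCircle T → ℂ) n = fourierCoeffOn h0T (deriv W) n := by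
    intro n
    have : (F'C : AddCircle T → ℂ) = hper'.lift := rfl
    rw [this, lift_eq_liftIoc _ hper', fourierCoeff_liftIoc_eq]
  -- coefficient relation
  have hrel : ∀ n : ℤ, n ≠ 0 → fourierCoeffOn h0T W n =
      (1 / (-2 * Real.pi * Complex.I * n)) * (-(((0:ℝ) + T - 0 : ℝ) : ℂ) *
        fourierCoeffOn h0T (deriv W) n) := by
    intro n hn
    have h := fourierCoeffOn_of_hasDerivAt h0T hn
      (f := W) (f' := deriv W)
      (fun x _ => ((hW.differentiable one_ne_zero) x).hasDerivAt)
      (hW'c.intervalIntegrable _ _)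
    rw [h]
    have hWT : W (0 + T) - W 0 = 0 := by rw [hper 0]; ring
    rw [hWT]
    push_cast
    ring
  -- Parseval
  have parseval : ∀ (G : C(AddCircle T, ℂ)),
      ∑' n : ℤ, ‖fourierCoeff (G : AddCircle T → ℂ) n‖^2
        = ∫ t : AddCircle T, ‖G t‖^2 ∂AddCircle.haarAddCircle := by
    intro G
    have h1 := tsum_sq_fourierCoeff
      (ContinuousMap.toLp (E := ℂ) 2 AddCircle.haarAddCircle ℂ G)
    simp_rw [fourierCoeff_toLp] at h1
    rw [h1]
    apply MeasureTheory.integral_congr_ae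
    filter_upwards [ContinuousMap.coeFn_toLp (p := 2) (μ := AddCircle.haarAddCircle) (𝕜 := ℂ) G]
      with t ht
    rw [ht]
  have hsum : ∀ (G : C(AddCircle T, ℂ)),
      Summable (fun n : ℤ => ‖fourierCoeff (G : AddCircle T → ℂ) n‖^2) := by
    intro G
    have hm := lp.memℓp (fourierBasis.repr
      (ContinuousMap.toLp (E := ℂ) 2 AddCircle.haarAddCircle ℂ G))
    have hs := hm.summable (by norm_num : 0 < (2:ℝ≥0∞).toReal)
    refine hs.congr fun i => ?_
    rw [fourierBasis_repr, fourierCoeff_toLp]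
    norm_num
  have hInt : ∀ (G : C(AddCircle T, ℂ)) (g : ℝ → ℂ), (∀ x : ℝ, G (x : AddCircle T) = g x) →
      ∫ t : AddCircle T, ‖G t‖^2 ∂AddCircle.haarAddCircle
        = (1/T) * ∫ x in (0:ℝ)..T, ‖g x‖^2 := by
    intro G g hGg
    have h1 : ∫ x in (0:ℝ)..(0+T), ‖G (x : AddCircle T)‖^2
        = ∫ t : AddCircle T, ‖G t‖^2 ∂(volume : Measure (AddCircle T)) :=
      AddCircle.intervalIntegral_preimage T 0 (fun z => ‖G z‖^2)
    rw [AddCircle.volume_eq_smul_haarAddCircle, MeasureTheory.integral_smul_measure,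
      ENNReal.toReal_ofReal hT.le] at h1
    rw [zero_add] at h1
    have h2 : ∫ x in (0:ℝ)..T, ‖G (x : AddCircle T)‖^2 = ∫ x in (0:ℝ)..T, ‖g x‖^2 := by
      congr 1
      funext x
      rw [hGg x]
    rw [h2] at h1
    rw [h1, smul_eq_mul]
    field_simp
  have hc0 : fourierCoeff (FC : AddCircle T → ℂ) 0 = 0 := by
    rw [fourierCoeff_eq_intervalIntegral _ 0 0]
    simp only [neg_zero, fourier_zero, one_smul, zero_add]
    have : ∫ x in (0:ℝ)..T, (FC : AddCircle T → ℂ) (x : AddCircle T) = 0 := by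
      rw [show (fun x : ℝ => (FC : AddCircle T → ℂ) (x : AddCircle T)) = W from rfl]
      exact hmean
    rw [this, smul_zero]
  have key : ∀ n : ℤ, ‖fourierCoeff (FC : AddCircle T → ℂ) n‖^2
      ≤ (T/(2*Real.pi))^2 * ‖fourierCoeff (F'C : AddCircle T → ℂ) n‖^2 := by
    intro n
    rcases eq_or_ne n 0 with rfl | hn
    · rw [hc0]
      norm_num
      positivity
    · rw [hbr n, hbr' n, hrel n hn]
      have hπ : (0:ℝ) < Real.pi := Real.pi_pos
      have hn1 : (1:ℝ) ≤ |(n:ℝ)| := by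
        rw [← Int.cast_abs]
        exact_mod_cast Int.one_le_abs hn
      have e1 : ‖(1 / (-2 * (Real.pi:ℂ) * Complex.I * (n:ℂ)))
          * (-(((0:ℝ) + T - 0 : ℝ) : ℂ) * fourierCoeffOn h0T (deriv W) n)‖
          = (T/(2*Real.pi*|(n:ℝ)|)) * ‖fourierCoeffOn h0T (deriv W) n‖ := by
        rw [norm_mul, norm_mul, norm_neg]
        have : ‖(1 / (-2 * (Real.pi:ℂ) * Complex.I * (n:ℂ)))‖ = 1/(2*Real.pi*|(n:ℝ)|) := by
          rw [norm_div, norm_mul, norm_mul, norm_mul]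
          simp [Complex.norm_real, abs_of_pos hπ]
        rw [this]
        have h2 : ‖(((0:ℝ) + T - 0 : ℝ) : ℂ)‖ = T := by
          simp [Complex.norm_real, abs_of_pos hT]
        rw [h2]
        ring
      rw [e1, mul_pow]
      have hfrac : (T/(2*Real.pi*|(n:ℝ)|))^2 ≤ (T/(2*Real.pi))^2 := by
        apply pow_le_pow_left₀ (by positivity)
        apply div_le_div_of_nonneg_left hT.le (by positivity)
        nlinarith
      exact mul_le_mul_of_nonneg_right hfrac (by positivity)
  have hPF := parseval FC
  have hPF' := parseval F'C
  rw [hInt FC W (fun x => rfl)] at hPF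
  rw [hInt F'C (deriv W) (fun x => rfl)] at hPF'
  have hsum' := (hsum F'C).mul_left ((T/(2*Real.pi))^2)
  have hle : ∑' n : ℤ, ‖fourierCoeff (FC : AddCircle T → ℂ) n‖^2
      ≤ ∑' n : ℤ, (T/(2*Real.pi))^2 * ‖fourierCoeff (F'C : AddCircle T → ℂ) n‖^2 :=
    Summable.tsum_le_tsum key (Summable.of_nonneg_of_le (fun n => by positivity) key hsum') hsum'
  rw [tsum_mul_left, hPF', hPF] at hle
  have hT' : (0:ℝ) < 1/T := by positivity
  have hfin := mul_le_mul_of_nonneg_left hle hT.le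
  have hl : T * (1 / T * ∫ x in (0:ℝ)..T, ‖W x‖ ^ 2) = ∫ x in (0:ℝ)..T, ‖W x‖ ^ 2 := by
    field_simp
  have hr : T * ((T / (2 * Real.pi)) ^ 2 * (1 / T * ∫ x in (0:ℝ)..T, ‖deriv W x‖ ^ 2))
      = (T / (2 * Real.pi)) ^ 2 * ∫ x in (0:ℝ)..T, ‖deriv W x‖ ^ 2 := by
    field_simp
  rw [hl, hr] at hfin
  exact hfin

lemma wirtinger_real {T : ℝ} (hT : 0 < T) (V : ℝ → ℝ) (hV : ContDiff ℝ 1 V)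
    (hper : Function.Periodic V T) (hmean : ∫ x in (0:ℝ)..T, V x = 0) :
    ∫ x in (0:ℝ)..T, (V x)^2 ≤ (T/(2*Real.pi))^2 * ∫ x in (0:ℝ)..T, (deriv V x)^2 := by
  set Vc : ℝ → ℂ := fun x => ((V x : ℝ) : ℂ) with hVc
  have hVcd : ContDiff ℝ 1 Vc := Complex.ofRealCLM.contDiff.comp hV
  have hVcper : Function.Periodic Vc T := fun x => by simp [hVc, hper x]
  have hVcmean : ∫ x in (0:ℝ)..T, Vc x = 0 := by
    rw [hVc]
    rw [intervalIntegral.integral_ofReal]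
    rw [hmean]
    simp
  have hderiv : ∀ x, deriv Vc x = ((deriv V x : ℝ) : ℂ) := by
    intro x
    have h1 : HasDerivAt V (deriv V x) x := ((hV.differentiable one_ne_zero) x).hasDerivAt
    exact (h1.ofReal_comp).deriv
  have := wirtinger hT Vc hVcd hVcper hVcmean
  have e1 : ∫ x in (0:ℝ)..T, ‖Vc x‖^2 = ∫ x in (0:ℝ)..T, (V x)^2 := by
    congr 1; funext x; rw [Complex.norm_real]; exact sq_abs (V x)
  have e2 : ∫ x in (0:ℝ)..T, ‖deriv Vc x‖^2 = ∫ x in (0:ℝ)..T, (deriv V x)^2 := by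
    congr 1; funext x; rw [hderiv x, Complex.norm_real]; exact sq_abs _
  rw [e1, e2] at this
  exact this

lemma zero_of_nonneg_cont_integral_zero {T : ℝ} (hT : 0 < T) {f : ℝ → ℝ}
    (hf : Continuous f) (hnn : ∀ x, 0 ≤ f x) (hperf : Function.Periodic f T)
    (hint : ∫ x in (0:ℝ)..T, f x = 0) : ∀ x, f x = 0 := by
  by_contra hc
  push_neg at hc
  obtain ⟨x, hx⟩ := hc
  have hfx : 0 < f x := lt_of_le_of_ne (hnn x) (Ne.symm hx)
  -- reduce to a point in (0, T]
  have hy0 : 0 ≤ x - ⌊x / T⌋ * T := Int.sub_floor_div_mul_nonneg x hT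
  have hyT : x - ⌊x / T⌋ * T < T := Int.sub_floor_div_mul_lt x hT
  have hfy : 0 < f (x - ⌊x / T⌋ * T) := by
    rw [hperf.sub_int_mul_eq]
    exact hfx
  set y := x - ⌊x / T⌋ * T with hy
  have key : ∃ p, p ∈ Set.Ioc 0 T ∧ 0 < f p := by
    rcases eq_or_lt_of_le hy0 with h0 | h0
    · refine ⟨T, ⟨hT, le_refl T⟩, ?_⟩
      have hT0 : f T = f 0 := by simpa using hperf 0
      have hy0' : f y = f 0 := by rw [← h0]
      rw [hT0, ← hy0']
      exact hfy
    · exact ⟨y, ⟨h0, hyT.le⟩, hfy⟩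
  obtain ⟨p, hp, hfp⟩ := key
  have hnb : ∀ᶠ z in nhds p, f z ∈ Set.Ioi (0:ℝ) :=
    hf.continuousAt.preimage_mem_nhds (Ioi_mem_nhds hfp)
  obtain ⟨δ, hδ, hball⟩ := Metric.eventually_nhds_iff_ball.mp hnb
  set l := max (p - δ) 0 with hl
  have hlp : l < p := max_lt (by linarith) hp.1
  have hsub : Set.Ioo l p ⊆ Function.support f ∩ Set.Ioc 0 T := by
    intro z hz
    constructor
    · apply Function.mem_support.mpr
      have : z ∈ Metric.ball p δ := by
        rw [Real.ball_eq_Ioo]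
        exact ⟨lt_of_le_of_lt (le_max_left _ _) hz.1, by linarith [hz.2]⟩
      exact ne_of_gt (hball z this)
    · exact ⟨lt_of_le_of_lt (le_max_right _ _) hz.1, le_trans hz.2.le hp.2⟩
  have hpos : 0 < volume (Function.support f ∩ Set.Ioc 0 T) := by
    refine lt_of_lt_of_le ?_ (measure_mono hsub)
    rw [Real.volume_Ioo]
    simp only [ENNReal.ofReal_pos]
    linarith
  have := (intervalIntegral.integral_pos_iff_support_of_nonneg_ae
    (Eventually.of_forall hnn) (hf.intervalIntegrable 0 T)).mpr ⟨hT, hpos⟩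
  rw [hint] at this
  exact lt_irrefl 0 this

set_option maxHeartbeats 1000000 in
lemma aux_bound (T lam m : ℝ) (hT : 0 < T) (hlam : 0 < lam)
    (ψ : ℝ → ℂ) (hψ : ContDiff ℝ 1 ψ) (hper : Function.Periodic ψ T)
    (hmass : ∫ x in (0:ℝ)..T, ‖ψ x‖ ^ 2 = m) :
    (∫ x in (0:ℝ)..T, (‖ψ x‖^2 - m/T)^2)
      ≤ lam*(m/T)*(T/(2*Real.pi))^2 * (∫ x in (0:ℝ)..T, (‖ψ x‖^2 - m/T)^2)
        + (1/lam) * ∫ x in (0:ℝ)..T, ‖deriv ψ x‖^2 := by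
  have hψd : Differentiable ℝ ψ := hψ.differentiable one_ne_zero
  have hψc : Continuous ψ := hψ.continuous
  have hψ'c : Continuous (deriv ψ) := hψ.continuous_deriv le_rfl
  have hc2 : Continuous fun x : ℝ => ‖ψ x‖^2 := (continuous_norm.comp hψc).pow 2
  have hcD : Continuous fun x : ℝ => ‖deriv ψ x‖^2 :=
    (continuous_norm.comp hψ'c).pow 2
  set g : ℝ → ℝ := fun x => ‖ψ x‖^2 - m/T with hgdef
  set g' : ℝ → ℝ := fun x => 2*((ψ x).re*(deriv ψ x).re + (ψ x).im*(deriv ψ x).im) with hg'def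
  have habs : ∀ y : ℝ, ‖ψ y‖^2 = (ψ y).re*(ψ y).re + (ψ y).im*(ψ y).im := by
    intro y; rw [Complex.sq_norm, Complex.normSq_apply]
  have hrederiv : ∀ x, HasDerivAt (fun y => (ψ y).re) ((deriv ψ x).re) x := fun x => by
    exact Complex.reCLM.hasFDerivAt.comp_hasDerivAt x (hψd x).hasDerivAt
  have himderiv : ∀ x, HasDerivAt (fun y => (ψ y).im) ((deriv ψ x).im) x := fun x => by
    exact Complex.imCLM.hasFDerivAt.comp_hasDerivAt x (hψd x).hasDerivAt
  have hgder : ∀ x, HasDerivAt g (g' x) x := by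
    intro x
    have h1 : HasDerivAt (fun y => ((ψ y).re*(ψ y).re + (ψ y).im*(ψ y).im) - m/T)
        ((deriv ψ x).re*(ψ x).re + (ψ x).re*(deriv ψ x).re
          + ((deriv ψ x).im*(ψ x).im + (ψ x).im*(deriv ψ x).im)) x :=
      (((hrederiv x).mul (hrederiv x)).add ((himderiv x).mul (himderiv x))).sub_const _
    have h2 : g = fun y => ((ψ y).re*(ψ y).re + (ψ y).im*(ψ y).im) - m/T := by
      funext y; simp only [hgdef]; rw [habs y]
    rw [h2]
    convert h1 using 1
    rw [hg'def]; ring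
  have hgc : Continuous g := hc2.sub continuous_const
  have hg'c : Continuous g' := by
    apply Continuous.mul continuous_const
    exact ((Complex.continuous_re.comp hψc).mul (Complex.continuous_re.comp hψ'c)).add
      ((Complex.continuous_im.comp hψc).mul (Complex.continuous_im.comp hψ'c))
  have hperg : Function.Periodic g T := by
    intro x; simp only [hgdef, hper x]
  have hgzero : ∫ x in (0:ℝ)..T, g x = 0 := by
    show ∫ x in (0:ℝ)..T, (‖ψ x‖^2 - m/T) = 0
    rw [intervalIntegral.integral_sub (hc2.intervalIntegrable 0 T) intervalIntegrable_const]
    rw [hmass, intervalIntegral.integral_const]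
    rw [smul_eq_mul]
    field_simp
    ring
  -- antiderivative
  set A : ℝ → ℝ := fun x => ∫ t in (0:ℝ)..x, g t with hAdef
  have hAder : ∀ x, HasDerivAt A (g x) x := fun x =>
    intervalIntegral.integral_hasDerivAt_right (hgc.intervalIntegrable 0 x)
      (hgc.aestronglyMeasurable.stronglyMeasurableAtFilter) hgc.continuousAt
  have hAc : Continuous A := by
    rw [continuous_iff_continuousAt]; exact fun x => (hAder x).differentiableAt.continuousAt
  set c : ℝ := (1/T) * ∫ t in (0:ℝ)..T, A t with hcdef
  set V : ℝ → ℝ := fun x => A x - c with hVdef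
  have hVder : ∀ x, HasDerivAt V (g x) x := fun x => (hAder x).sub_const c
  have hVderiv : deriv V = g := funext fun x => (hVder x).deriv
  have hVc : Continuous V := hAc.sub continuous_const
  have hVper : Function.Periodic V T := by
    intro x
    have h1 : A x + ∫ t in x..(x+T), g t = A (x+T) :=
      intervalIntegral.integral_add_adjacent_intervals (hgc.intervalIntegrable 0 x)
        (hgc.intervalIntegrable x (x+T))
    have h2 : ∫ t in x..(x+T), g t = ∫ t in (0:ℝ)..(0+T), g t :=
      hperg.intervalIntegral_add_eq x 0
    rw [zero_add, hgzero] at h2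
    have h3 : A (x+T) = A x := by rw [← h1, h2, add_zero]
    simp only [hVdef, h3]
  have hVcd : ContDiff ℝ 1 V := by
    rw [contDiff_one_iff_deriv]
    exact ⟨fun x => (hVder x).differentiableAt, by rw [hVderiv]; exact hgc⟩
  have hVmean : ∫ x in (0:ℝ)..T, V x = 0 := by
    simp only [hVdef]
    rw [intervalIntegral.integral_sub (hAc.intervalIntegrable 0 T) intervalIntegrable_const]
    rw [intervalIntegral.integral_const, hcdef]
    rw [smul_eq_mul, sub_zero]
    field_simp
    ring
  -- Wirtinger
  have hWir : ∫ x in (0:ℝ)..T, (V x)^2 ≤ (T/(2*Real.pi))^2 * ∫ x in (0:ℝ)..T, (g x)^2 := by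
    have := wirtinger_real hT V hVcd hVper hVmean
    rw [hVderiv] at this
    exact this
  -- integration by parts
  have hparts : ∫ x in (0:ℝ)..T, (g x)^2 = - ∫ x in (0:ℝ)..T, V x * g' x := by
    have h1 := intervalIntegral.integral_mul_deriv_eq_deriv_mul
      (u := V) (u' := g) (v := g) (v' := g')
      (fun x _ => hVder x) (fun x _ => hgder x)
      (hgc.intervalIntegrable 0 T) (hg'c.intervalIntegrable 0 T)
    -- h1 : ∫ V x * g' x = V T * g T - V 0 * g 0 - ∫ g x * g x
    have hVT : V T = V 0 := by have := hVper 0; rwa [zero_add] at this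
    have hgT : g T = g 0 := by have := hperg 0; rwa [zero_add] at this
    rw [hVT, hgT] at h1
    have h2 : ∫ x in (0:ℝ)..T, g x * g x = ∫ x in (0:ℝ)..T, (g x)^2 := by
      congr 1; funext x; ring
    rw [h2] at h1
    rw [h1]; ring
  -- pointwise bound
  have hpt : ∀ x, -(V x * g' x) ≤ lam * ((V x)^2 * ‖ψ x‖^2)
      + (1/lam) * ‖deriv ψ x‖^2 := by
    intro x
    have e1 : ‖ψ x‖^2 = (ψ x).re*(ψ x).re + (ψ x).im*(ψ x).im := habs x
    have e2 : ‖deriv ψ x‖^2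
        = (deriv ψ x).re*(deriv ψ x).re + (deriv ψ x).im*(deriv ψ x).im := by
      rw [Complex.sq_norm, Complex.normSq_apply]
    have hg'sq : (g' x)^2 ≤ 4 * (‖ψ x‖^2) * (‖deriv ψ x‖^2) := by
      simp only [e1, e2, hg'def]
      nlinarith [sq_nonneg ((ψ x).re*(deriv ψ x).im - (ψ x).im*(deriv ψ x).re)]
    have hh0 : (0:ℝ) ≤ ‖ψ x‖^2 := by positivity
    have hD0 : (0:ℝ) ≤ ‖deriv ψ x‖^2 := by positivity
    set a : ℝ := lam * ((V x)^2 * ‖ψ x‖^2) with hadef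
    set b : ℝ := (1/lam) * ‖deriv ψ x‖^2 with hbdef
    have ha0 : 0 ≤ a := by positivity
    have hb0 : 0 ≤ b := by positivity
    have hab : (V x * g' x)^2 ≤ 4 * (a * b) := by
      have : a * b = (V x)^2 * (‖ψ x‖^2 * ‖deriv ψ x‖^2) := by
        rw [hadef, hbdef]; field_simp
      rw [this]
      nlinarith [sq_nonneg (V x), hg'sq, sq_nonneg (V x * g' x)]
    nlinarith [sq_nonneg (a - b), sq_nonneg (a + b), ha0, hb0, hab]
  -- integrate the pointwise bound
  have hintpt : ∫ x in (0:ℝ)..T, -(V x * g' x)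
      ≤ ∫ x in (0:ℝ)..T, (lam * ((V x)^2 * ‖ψ x‖^2)
          + (1/lam) * ‖deriv ψ x‖^2) := by
    apply intervalIntegral.integral_mono_on hT.le
    · exact ((hVc.mul hg'c).neg).intervalIntegrable 0 T
    · exact ((continuous_const.mul ((hVc.pow 2).mul hc2)).add
        (continuous_const.mul hcD)).intervalIntegrable 0 T
    · exact fun x _ => hpt x
  -- split RHS
  have hsplit : ∫ x in (0:ℝ)..T, (lam * ((V x)^2 * ‖ψ x‖^2)
        + (1/lam) * ‖deriv ψ x‖^2)
      = lam * (∫ x in (0:ℝ)..T, (V x)^2 * ‖ψ x‖^2)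
        + (1/lam) * ∫ x in (0:ℝ)..T, ‖deriv ψ x‖^2 := by
    rw [intervalIntegral.integral_add, intervalIntegral.integral_const_mul,
      intervalIntegral.integral_const_mul]
    · exact (continuous_const.mul ((hVc.pow 2).mul hc2)).intervalIntegrable 0 T
    · exact (continuous_const.mul hcD).intervalIntegrable 0 T
  -- the V² h integral
  have hcube : ∫ x in (0:ℝ)..T, (V x)^2 * g x = 0 := by
    have hder3 : ∀ x ∈ Set.uIcc (0:ℝ) T, HasDerivAt (fun y => (V y)^3/3) ((V x)^2 * g x) x := by
      intro x _
      have := ((hVder x).fun_pow 3).div_const 3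
      exact this.congr_deriv (by rw [show (3:ℕ) - 1 = 2 from rfl]; ring)
    rw [intervalIntegral.integral_eq_sub_of_hasDerivAt hder3
      (((hVc.pow 2).mul hgc).intervalIntegrable 0 T)]
    have hVT : V T = V 0 := by have := hVper 0; rwa [zero_add] at this
    rw [hVT]; ring
  have hV2h : ∫ x in (0:ℝ)..T, (V x)^2 * ‖ψ x‖^2
      = (m/T) * (∫ x in (0:ℝ)..T, (V x)^2) := by
    have e : ∀ x : ℝ, (V x)^2 * ‖ψ x‖^2 = (V x)^2 * g x + (m/T) * (V x)^2 := by
      intro x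
      have hgx : g x = ‖ψ x‖^2 - m/T := by simp only [hgdef]
      rw [hgx]; ring
    rw [intervalIntegral.integral_congr (fun x _ => e x)]
    rw [intervalIntegral.integral_add (f := fun x => V x ^ 2 * g x) (g := fun x => m / T * V x ^ 2) (((hVc.pow 2).mul hgc).intervalIntegrable 0 T)
      ((continuous_const.mul (hVc.pow 2)).intervalIntegrable 0 T)]

    rw [hcube, intervalIntegral.integral_const_mul]
    ring
  -- assemble
  have hXpos : (0:ℝ) ≤ ∫ x in (0:ℝ)..T, (g x)^2 :=
    intervalIntegral.integral_nonneg hT.le (fun x _ => sq_nonneg _)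
  calc ∫ x in (0:ℝ)..T, (g x)^2
      = ∫ x in (0:ℝ)..T, -(V x * g' x) := by
        rw [hparts, ← intervalIntegral.integral_neg]
    _ ≤ lam * (∫ x in (0:ℝ)..T, (V x)^2 * ‖ψ x‖^2)
        + (1/lam) * ∫ x in (0:ℝ)..T, ‖deriv ψ x‖^2 := by
        rw [← hsplit]; exact hintpt
    _ = lam * ((m/T) * ∫ x in (0:ℝ)..T, (V x)^2)
        + (1/lam) * ∫ x in (0:ℝ)..T, ‖deriv ψ x‖^2 := by rw [hV2h]
    _ ≤ lam * ((m/T) * ((T/(2*Real.pi))^2 * ∫ x in (0:ℝ)..T, (g x)^2))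
        + (1/lam) * ∫ x in (0:ℝ)..T, ‖deriv ψ x‖^2 := by
        have hmT : 0 ≤ m/T := by
          have : 0 ≤ m := by
            rw [← hmass]
            exact intervalIntegral.integral_nonneg hT.le (fun x _ => by positivity)
          positivity
        have hlam' : (0:ℝ) ≤ lam := hlam.le
        gcongr
    _ = lam*(m/T)*(T/(2*Real.pi))^2 * (∫ x in (0:ℝ)..T, (g x)^2)
        + (1/lam) * ∫ x in (0:ℝ)..T, ‖deriv ψ x‖^2 := by ring

set_option maxHeartbeats 1000000 in
/-- For `T > 0`, `λ > 0` and `0 < m < 2π²/(λT)`, every `C¹` `T`-periodic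
function `ψ : ℝ → ℂ` of mass `m` has energy at least `-λ m² / (4T)`, with equality
iff `ψ` is the constant `√(m/T) e^{iθ}` for some `θ ∈ ℝ`. -/
theorem ring_small_mass_constant_ground_state
    (T lam m : ℝ) (hT : 0 < T) (hlam : 0 < lam)
    (hm : 0 < m) (hm' : m < 2 * Real.pi ^ 2 / (lam * T))
    (ψ : ℝ → ℂ) (hψ : ContDiff ℝ 1 ψ) (hper : Function.Periodic ψ T)
    (hmass : ∫ x in (0:ℝ)..T, ‖ψ x‖ ^ 2 = m) :
    ((1/2) * ∫ x in (0:ℝ)..T, ‖deriv ψ x‖ ^ 2)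
        - (lam/4) * ∫ x in (0:ℝ)..T, ‖ψ x‖ ^ 4
      ≥ - lam * m ^ 2 / (4 * T)
    ∧ ((((1/2) * ∫ x in (0:ℝ)..T, ‖deriv ψ x‖ ^ 2)
        - (lam/4) * ∫ x in (0:ℝ)..T, ‖ψ x‖ ^ 4
      = - lam * m ^ 2 / (4 * T))
      ↔ ∃ θ : ℝ, ∀ x : ℝ,
          ψ x = (Real.sqrt (m / T) : ℂ) * Complex.exp (θ * Complex.I)) := by
  have hπ : (0:ℝ) < Real.pi := Real.pi_pos
  have hψc : Continuous ψ := hψ.continuous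
  have hψ'c : Continuous (deriv ψ) := hψ.continuous_deriv le_rfl
  have hc2 : Continuous fun x : ℝ => ‖ψ x‖^2 := (continuous_norm.comp hψc).pow 2
  have hcD : Continuous fun x : ℝ => ‖deriv ψ x‖^2 :=
    (continuous_norm.comp hψ'c).pow 2
  have hcg : Continuous fun x : ℝ => (‖ψ x‖^2 - m/T)^2 :=
    (hc2.sub continuous_const).pow 2
  set X : ℝ := ∫ x in (0:ℝ)..T, (‖ψ x‖^2 - m/T)^2 with hXdef
  set K : ℝ := ∫ x in (0:ℝ)..T, ‖deriv ψ x‖ ^ 2 with hKdef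
  have hX0 : 0 ≤ X :=
    intervalIntegral.integral_nonneg hT.le fun x _ => sq_nonneg _
  have hK0 : 0 ≤ K :=
    intervalIntegral.integral_nonneg hT.le fun x _ => by positivity
  have hgzero : ∫ x in (0:ℝ)..T, (‖ψ x‖^2 - m/T) = 0 := by
    rw [intervalIntegral.integral_sub (hc2.intervalIntegrable 0 T) intervalIntegrable_const,
      hmass, intervalIntegral.integral_const, smul_eq_mul]
    field_simp
    ring
  have hquart : ∫ x in (0:ℝ)..T, ‖ψ x‖^4 = X + m^2/T := by
    have e : ∀ x : ℝ, ‖ψ x‖^4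
        = ((‖ψ x‖^2 - m/T)^2 + (2*(m/T))*(‖ψ x‖^2 - m/T)) + (m/T)^2 := by
      intro x; ring
    rw [intervalIntegral.integral_congr (fun x _ => e x)]
    rw [intervalIntegral.integral_add (f := fun x => (‖ψ x‖^2 - m/T)^2 + (2*(m/T))*(‖ψ x‖^2 - m/T))
      (g := fun _ => (m/T)^2)
      ((hcg.add (continuous_const.mul (hc2.sub continuous_const))).intervalIntegrable 0 T)
      intervalIntegrable_const]
    rw [intervalIntegral.integral_add (f := fun x => (‖ψ x‖^2 - m/T)^2)
      (g := fun x => (2*(m/T))*(‖ψ x‖^2 - m/T)) (hcg.intervalIntegrable 0 T)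
      ((continuous_const.mul (hc2.sub continuous_const)).intervalIntegrable 0 T)]
    rw [intervalIntegral.integral_const_mul, hgzero, intervalIntegral.integral_const, smul_eq_mul]
    rw [← hXdef]
    field_simp
    ring
  have haux := aux_bound T lam m hT hlam ψ hψ hper hmass
  rw [← hXdef, ← hKdef] at haux
  have hAval : lam*(m/T)*(T/(2*Real.pi))^2 = lam*m*T/(4*Real.pi^2) := by
    field_simp
    ring
  rw [hAval] at haux
  have hsmall : lam*m*T < 2*Real.pi^2 := by
    have h1 : 0 < lam*T := by positivity
    have h2 := (lt_div_iff₀ h1).mp hm'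
    nlinarith [h2]
  have hA2 : lam*m*T/(4*Real.pi^2) < 1/2 := by
    rw [div_lt_iff₀ (by positivity)]
    nlinarith
  have h3 : lam * X ≤ lam * (lam*m*T/(4*Real.pi^2)) * X + K := by
    have := mul_le_mul_of_nonneg_left haux hlam.le
    calc lam * X ≤ lam * (lam*m*T/(4*Real.pi^2) * X + 1/lam * K) := this
      _ = lam * (lam*m*T/(4*Real.pi^2)) * X + K := by field_simp
  have hkey : lam * X ≤ 2 * K := by
    nlinarith [h3, hA2, mul_nonneg hlam.le hX0]
  have hT0 : T ≠ 0 := hT.ne'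
  have expand : ((1:ℝ)/2 * K - lam/4 * (X + m^2/T)) - (- lam * m^2/(4*T))
      = (2*K - lam*X)/4 := by field_simp; ring
  constructor
  · rw [hquart]
    have h4 : 0 ≤ (2*K - lam*X)/4 := by linarith
    rw [ge_iff_le, ← sub_nonneg, expand]
    exact h4
  · constructor
    · intro heq
      rw [hquart] at heq
      have hXK : lam * X = 2 * K := by
        have h5 : (2*K - lam*X)/4 = 0 := by rw [← expand, heq, sub_self]
        linarith
      have hKle : K ≤ 0 := by
        nlinarith [h3, hXK, hK0, hA2]
      have hK00 : K = 0 := le_antisymm hKle hK0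
      have hperD : Function.Periodic (fun x : ℝ => ‖deriv ψ x‖^2) T := by
        intro x
        simp only
        rw [periodic_deriv' hψ hper x]
      have hDzero := zero_of_nonneg_cont_integral_zero hT hcD (fun x => by positivity) hperD
        (by rw [← hKdef]; exact hK00)
      have hD0 : ∀ x, deriv ψ x = 0 := by
        intro x
        have h5 := hDzero x
        have h6 : ‖deriv ψ x‖ = 0 := by
          have := sq_nonneg (‖deriv ψ x‖)
          nlinarith [norm_nonneg (deriv ψ x)]
        exact norm_eq_zero.mp h6
      have hconst : ∀ x, ψ x = ψ 0 := fun x =>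
        is_const_of_deriv_eq_zero (hψ.differentiable one_ne_zero) hD0 x 0
      have habsψ0 : ‖ψ 0‖^2 = m/T := by
        have e1 : ∫ x in (0:ℝ)..T, ‖ψ x‖^2
            = ∫ x in (0:ℝ)..T, ‖ψ 0‖^2 :=
          intervalIntegral.integral_congr (fun x _ => by rw [hconst x])
        rw [e1, intervalIntegral.integral_const, smul_eq_mul, sub_zero] at hmass
        rw [eq_div_iff hT.ne']
        linarith [hmass]
      refine ⟨Complex.arg (ψ 0), fun x => ?_⟩
      rw [hconst x]
      have hne : ‖ψ 0‖ = Real.sqrt (m/T) := by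
        rw [← habsψ0, Real.sqrt_sq (norm_nonneg _)]
      conv_lhs => rw [← Complex.norm_mul_exp_arg_mul_I (ψ 0)]
      rw [hne]
    · rintro ⟨θ, hconst⟩
      have hψeq : ψ = fun _ => (Real.sqrt (m/T) : ℂ) * Complex.exp (θ * Complex.I) :=
        funext hconst
      have hD : deriv ψ = fun _ => (0:ℂ) := by
        rw [hψeq]
        funext x
        exact deriv_const x _
      have hKval : K = 0 := by
        rw [hKdef, hD]
        simp
      have habsC : ‖(Real.sqrt (m/T) : ℂ) * Complex.exp (θ * Complex.I)‖ ^ 2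
          = m/T := by
        rw [norm_mul, Complex.norm_exp]
        have : ((θ : ℂ) * Complex.I).re = 0 := by simp
        rw [this, Real.exp_zero, mul_one, Complex.norm_real, Real.norm_eq_abs,
          abs_of_nonneg (Real.sqrt_nonneg _), Real.sq_sqrt (by positivity)]
      have hquartval : ∫ x in (0:ℝ)..T, ‖ψ x‖^4 = (m/T)^2*T := by
        have e : ∀ x ∈ Set.uIcc (0:ℝ) T, ‖ψ x‖^4 = (m/T)^2 := by
          intro x _
          rw [hconst x]
          have : ‖(Real.sqrt (m/T) : ℂ) * Complex.exp (θ * Complex.I)‖ ^ 4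
              = (‖(Real.sqrt (m/T) : ℂ) * Complex.exp (θ * Complex.I)‖ ^ 2)^2 := by
            ring
          rw [this, habsC]
        rw [intervalIntegral.integral_congr e, intervalIntegral.integral_const, smul_eq_mul]
        ring
      rw [hquartval, hKval]
      field_simp
      ring
end

section
/- Let T>0, λ>0 and let m>2π²/(λT). Then there exists a continuously differentiable T-periodic function ψ:ℝ→ℂ with ∫₀ᵀ|ψ(x)|²dx=m whose energy is strictly smaller than that of the constant: E(ψ) := (1/2)∫₀ᵀ|ψ'(x)|²dx − (λ/4)∫₀ᵀ|ψ(x)|⁴dx < −λm²/(4T). In particular, above the mass threshold 2π²/(λT) the constant function √(m/T) is no longer a minimizer of the energy at fixed mass. -/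
open MeasureTheory

/- Auxiliary derivative lemmas for trigonometric products. -/
lemma hasDerivAt_sin_k (k x : ℝ) :
    HasDerivAt (fun y => Real.sin (k * y)) (k * Real.cos (k * x)) x := by
  exact ((Real.hasDerivAt_sin (k * x)).comp x ((hasDerivAt_id x).const_mul k)).congr_deriv
    (by ring)

lemma hasDerivAt_cos_k (k x : ℝ) :
    HasDerivAt (fun y => Real.cos (k * y)) (-(k * Real.sin (k * x))) x := by
  exact ((Real.hasDerivAt_cos (k * x)).comp x ((hasDerivAt_id x).const_mul k)).congr_deriv
    (by ring)

lemma hasDerivAt_sc (k x : ℝ) :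
    HasDerivAt (fun y => Real.sin (k*y) * Real.cos (k*y))
      (k * (2 * Real.cos (k*x)^2 - 1)) x := by
  have h := (hasDerivAt_sin_k k x).mul (hasDerivAt_cos_k k x)
  refine h.congr_deriv ?_
  symm
  linear_combination k * Real.sin_sq_add_cos_sq (k*x)

lemma hasDerivAt_sc2 (k x : ℝ) :
    HasDerivAt (fun y => Real.sin (k*y) * Real.cos (k*y)^2)
      (k * (3 * Real.cos (k*x)^3 - 2 * Real.cos (k*x))) x := by
  have h := (hasDerivAt_sin_k k x).mul ((hasDerivAt_cos_k k x).pow 2)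
  refine h.congr_deriv ?_
  symm
  push_cast [Pi.pow_apply]
  linear_combination (2 * k * Real.cos (k*x)) * Real.sin_sq_add_cos_sq (k*x)

lemma hasDerivAt_sc3 (k x : ℝ) :
    HasDerivAt (fun y => Real.sin (k*y) * Real.cos (k*y)^3)
      (k * (4 * Real.cos (k*x)^4 - 3 * Real.cos (k*x)^2)) x := by
  have h := (hasDerivAt_sin_k k x).mul ((hasDerivAt_cos_k k x).pow 3)
  refine h.congr_deriv ?_
  symm
  push_cast [Pi.pow_apply]
  linear_combination (3 * k * Real.cos (k*x)^2) * Real.sin_sq_add_cos_sq (k*x)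

lemma integral_sinsq (T : ℝ) (hT : 0 < T) :
    ∫ x in (0:ℝ)..T, Real.sin (2*Real.pi/T*x)^2 = T/2 := by
  set k := 2*Real.pi/T with hk
  have hk0 : k ≠ 0 := by
    have : 0 < k := by rw [hk]; positivity
    exact ne_of_gt this
  have hkT : k * T = 2*Real.pi := by rw [hk]; field_simp
  have key : (∫ x in (0:ℝ)..T, Real.sin (k*x)^2)
      = (fun x => x/2 - (1/(2*k)) * (Real.sin (k*x) * Real.cos (k*x))) T
        - (fun x => x/2 - (1/(2*k)) * (Real.sin (k*x) * Real.cos (k*x))) 0 := by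
    apply intervalIntegral.integral_eq_sub_of_hasDerivAt
    · intro x _
      have H := ((hasDerivAt_id x).div_const 2).sub ((hasDerivAt_sc k x).const_mul (1/(2*k)))
      refine H.congr_deriv ?_
      symm
      have hs := Real.sin_sq_add_cos_sq (k*x)
      have hkk : 1/(2*k)*(k*(2*Real.cos (k*x)^2-1)) = (2*Real.cos (k*x)^2-1)/2 := by
        field_simp
      rw [hkk]
      linear_combination hs
    · apply Continuous.intervalIntegrable
      fun_prop
  rw [key]
  simp [hkT, Real.sin_two_pi, Real.cos_two_pi]

lemma integral_quad (T a b : ℝ) (hT : 0 < T) :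
    ∫ x in (0:ℝ)..T, (a + b * Real.cos (2*Real.pi/T*x))^2 = (a^2 + b^2/2) * T := by
  set k := 2*Real.pi/T with hk
  have hk0 : k ≠ 0 := by
    have : 0 < k := by rw [hk]; positivity
    exact ne_of_gt this
  have hkT : k * T = 2*Real.pi := by rw [hk]; field_simp
  have key : (∫ x in (0:ℝ)..T, (a + b * Real.cos (k*x))^2)
      = (fun x => (a^2+b^2/2)*x + (2*a*b/k)*Real.sin (k*x)
          + (b^2/(2*k))*(Real.sin (k*x)*Real.cos (k*x))) T
        - (fun x => (a^2+b^2/2)*x + (2*a*b/k)*Real.sin (k*x)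
          + (b^2/(2*k))*(Real.sin (k*x)*Real.cos (k*x))) 0 := by
    apply intervalIntegral.integral_eq_sub_of_hasDerivAt
    · intro x _
      have H := (((hasDerivAt_id x).const_mul (a^2+b^2/2)).add
          ((hasDerivAt_sin_k k x).const_mul (2*a*b/k))).add
          ((hasDerivAt_sc k x).const_mul (b^2/(2*k)))
      refine H.congr_deriv ?_
      symm
      field_simp
      ring
    · apply Continuous.intervalIntegrable
      fun_prop
  rw [key]
  simp [hkT, Real.sin_two_pi, Real.cos_two_pi]

lemma integral_quart (T a b : ℝ) (hT : 0 < T) :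
    ∫ x in (0:ℝ)..T, (a + b * Real.cos (2*Real.pi/T*x))^4
      = (a^4 + 3*a^2*b^2 + 3*b^4/8) * T := by
  set k := 2*Real.pi/T with hk
  have hk0 : k ≠ 0 := by
    have : 0 < k := by rw [hk]; positivity
    exact ne_of_gt this
  have hkT : k * T = 2*Real.pi := by rw [hk]; field_simp
  have key : (∫ x in (0:ℝ)..T, (a + b * Real.cos (k*x))^4)
      = (fun x => (a^4 + 3*a^2*b^2 + 3*b^4/8)*x
          + (4*a^3*b/k) * Real.sin (k*x)
          + (3*a^2*b^2/k + 3*b^4/(8*k)) * (Real.sin (k*x) * Real.cos (k*x))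
          + (4*a*b^3/(3*k)) * (Real.sin (k*x) * Real.cos (k*x)^2)
          + (8*a*b^3/(3*k)) * Real.sin (k*x)
          + (b^4/(4*k)) * (Real.sin (k*x) * Real.cos (k*x)^3)) T
        - (fun x => (a^4 + 3*a^2*b^2 + 3*b^4/8)*x
          + (4*a^3*b/k) * Real.sin (k*x)
          + (3*a^2*b^2/k + 3*b^4/(8*k)) * (Real.sin (k*x) * Real.cos (k*x))
          + (4*a*b^3/(3*k)) * (Real.sin (k*x) * Real.cos (k*x)^2)
          + (8*a*b^3/(3*k)) * Real.sin (k*x)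
          + (b^4/(4*k)) * (Real.sin (k*x) * Real.cos (k*x)^3)) 0 := by
    apply intervalIntegral.integral_eq_sub_of_hasDerivAt
    · intro x _
      have H := ((((((hasDerivAt_id x).const_mul (a^4 + 3*a^2*b^2 + 3*b^4/8)).add
          ((hasDerivAt_sin_k k x).const_mul (4*a^3*b/k))).add
          ((hasDerivAt_sc k x).const_mul (3*a^2*b^2/k + 3*b^4/(8*k)))).add
          ((hasDerivAt_sc2 k x).const_mul (4*a*b^3/(3*k)))).add
          ((hasDerivAt_sin_k k x).const_mul (8*a*b^3/(3*k)))).add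
          ((hasDerivAt_sc3 k x).const_mul (b^4/(4*k)))
      refine H.congr_deriv ?_
      symm
      field_simp
      ring
    · apply Continuous.intervalIntegrable
      fun_prop
  rw [key]
  simp [hkT, Real.sin_two_pi, Real.cos_two_pi]

/-- For `T > 0`, `λ > 0` and `m > 2π²/(λT)`, there exists a `C¹`
`T`-periodic function `ψ : ℝ → ℂ` of mass `m` whose energy is strictly smaller
than `-λ m² / (4T)`, the energy of the constant of the same mass. -/
theorem ring_large_mass_constant_not_minimizer
    (T lam m : ℝ) (hT : 0 < T) (hlam : 0 < lam)
    (hm : 2 * Real.pi ^ 2 / (lam * T) < m) :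
    ∃ ψ : ℝ → ℂ, ContDiff ℝ 1 ψ ∧ Function.Periodic ψ T ∧
      (∫ x in (0:ℝ)..T, ‖ψ x‖ ^ 2) = m ∧
      ((1/2) * ∫ x in (0:ℝ)..T, ‖deriv ψ x‖ ^ 2)
          - (lam/4) * ∫ x in (0:ℝ)..T, ‖ψ x‖ ^ 4
        < - lam * m ^ 2 / (4 * T) := by
  have hπ : 0 < Real.pi := Real.pi_pos
  have hm0 : 0 < m := lt_trans (by positivity) hm
  have hcore : 2 * Real.pi^2 < lam * T * m := by
    have h := (div_lt_iff₀ (by positivity : (0:ℝ) < lam*T)).mp hm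
    nlinarith
  set ε := Real.sqrt ((2*lam*T*m - 4*Real.pi^2)/(4*Real.pi^2)) with hεdef
  have hnum : 0 < (2*lam*T*m - 4*Real.pi^2)/(4*Real.pi^2) := by
    apply div_pos (by nlinarith) (by positivity)
  have hε : 0 < ε := Real.sqrt_pos.mpr hnum
  have hε2 : ε^2 = (2*lam*T*m - 4*Real.pi^2)/(4*Real.pi^2) := Real.sq_sqrt hnum.le
  have hεbound : 4*Real.pi^2*ε^2 = 2*lam*T*m - 4*Real.pi^2 := by
    rw [hε2]; field_simp
  set A := 1 + ε^2/2 with hA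
  have hApos : 0 < A := by positivity
  set c := Real.sqrt (m/(T*A)) with hcdef
  have hc2 : c^2 = m/(T*A) := Real.sq_sqrt (by positivity)
  set k := 2*Real.pi/T with hk
  have hkT : k * T = 2*Real.pi := by rw [hk]; field_simp
  clear_value ε A c k
  refine ⟨fun x => ((c*(1+ε*Real.cos (k*x)) : ℝ) : ℂ), ?_, ?_, ?_, ?_⟩
  · -- C¹
    have hcos : ContDiff ℝ 1 (fun x : ℝ => Real.cos (k*x)) :=
      (Real.contDiff_cos.of_le le_top).comp (contDiff_const.mul contDiff_id)
    have hf : ContDiff ℝ 1 (fun x : ℝ => c*(1+ε*Real.cos (k*x))) :=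
      contDiff_const.mul (contDiff_const.add (contDiff_const.mul hcos))
    exact Complex.ofRealCLM.contDiff.comp hf
  · -- periodic
    intro x
    have : k*(x+T) = k*x + 2*Real.pi := by rw [mul_add, hkT]
    simp [this, Real.cos_add_two_pi]
  · -- mass
    have h1 : (∫ x in (0:ℝ)..T, ‖((c*(1+ε*Real.cos (k*x)) : ℝ) : ℂ)‖ ^ 2)
        = ∫ x in (0:ℝ)..T, (c + (c*ε) * Real.cos (k*x))^2 := by
      apply intervalIntegral.integral_congr
      intro x _
      dsimp only
      rw [Complex.norm_real, Real.norm_eq_abs, sq_abs]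
      ring
    rw [h1, hk, integral_quad T c (c*ε) hT]
    have hm' : c^2*(A*T) = m := by
      rw [hc2]; field_simp
    rw [hA] at hm'
    linear_combination hm'
  · -- energy
    have hder : ∀ x : ℝ, deriv (fun x => ((c*(1+ε*Real.cos (k*x)) : ℝ) : ℂ)) x
        = ((-(c*ε*k*Real.sin (k*x)) : ℝ) : ℂ) := by
      intro x
      have hre : HasDerivAt (fun x : ℝ => c*(1+ε*Real.cos (k*x)))
          (-(c*ε*k*Real.sin (k*x))) x := by
        have h := (((hasDerivAt_cos_k k x).const_mul ε).const_add 1).const_mul c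
        refine h.congr_deriv ?_
        ring
      exact hre.ofReal_comp.deriv
    have hkin : (∫ x in (0:ℝ)..T,
        ‖deriv (fun x => ((c*(1+ε*Real.cos (k*x)) : ℝ) : ℂ)) x‖ ^ 2)
        = (c*ε*k)^2 * (T/2) := by
      have h1 : (∫ x in (0:ℝ)..T,
          ‖deriv (fun x => ((c*(1+ε*Real.cos (k*x)) : ℝ) : ℂ)) x‖ ^ 2)
          = ∫ x in (0:ℝ)..T, (c*ε*k)^2 * Real.sin (k*x)^2 := by
        apply intervalIntegral.integral_congr
        intro x _
        dsimp only
        rw [hder x, Complex.norm_real, Real.norm_eq_abs, sq_abs]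
        ring
      rw [h1, intervalIntegral.integral_const_mul, hk, integral_sinsq T hT]
    have hq : (∫ x in (0:ℝ)..T,
        ‖((c*(1+ε*Real.cos (k*x)) : ℝ) : ℂ)‖ ^ 4)
        = (c^4 + 3*c^2*(c*ε)^2 + 3*(c*ε)^4/8) * T := by
      have h1 : (∫ x in (0:ℝ)..T,
          ‖((c*(1+ε*Real.cos (k*x)) : ℝ) : ℂ)‖ ^ 4)
          = ∫ x in (0:ℝ)..T, (c + (c*ε) * Real.cos (k*x))^4 := by
        apply intervalIntegral.integral_congr
        intro x _
        dsimp only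
        rw [Complex.norm_real, Real.norm_eq_abs, pow_abs, abs_of_nonneg (by positivity)]
        ring
      rw [h1, hk, integral_quart T c (c*ε) hT]
    rw [hkin, hq]
    have hT0 : T ≠ 0 := ne_of_gt hT
    have hA0 : A ≠ 0 := ne_of_gt hApos
    have hEeq : (1/2) * ((c*ε*k)^2 * (T/2))
        - (lam/4) * ((c^4 + 3*c^2*(c*ε)^2 + 3*(c*ε)^4/8) * T)
        = -lam*m^2/(4*T)
          + (ε^2*m/(4*T^2*A^2)) * (4*Real.pi^2*A - lam*T*m*(2+ε^2/8)) := by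
      have e1 : (c*ε*k)^2 = (m/(T*A)) * ε^2 * (2*Real.pi/T)^2 := by
        rw [show (c*ε*k)^2 = c^2*ε^2*k^2 by ring, hc2, hk]
      have e2 : c^4 + 3*c^2*(c*ε)^2 + 3*(c*ε)^4/8
          = (m/(T*A))^2 * (1 + 3*ε^2 + 3*ε^4/8) := by
        rw [show c^4 + 3*c^2*(c*ε)^2 + 3*(c*ε)^4/8
            = (c^2)^2 * (1 + 3*ε^2 + 3*ε^4/8) by ring, hc2]
      rw [e1, e2, hA]
      have h2 : (1:ℝ) + ε^2/2 ≠ 0 := by positivity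
      field_simp
      ring
    rw [hEeq]
    have hfac : 4*Real.pi^2*A - lam*T*m*(2+ε^2/8) < 0 := by
      have h1 : 4*Real.pi^2*A = 4*Real.pi^2 + 2*Real.pi^2*ε^2 := by rw [hA]; ring
      have h2 : 0 ≤ lam*T*m*ε^2 := by positivity
      nlinarith [hεbound, hcore, h2]
    have hneg : (ε^2*m/(4*T^2*A^2)) * (4*Real.pi^2*A - lam*T*m*(2+ε^2/8)) < 0 :=
      mul_neg_of_pos_of_neg (by positivity) hfac
    linarith
end
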